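/- Let V ∈ ℂ^{n×n} be invertible, let D ∈ ℂ^{n×n} be a diagonal matrix, and let x ∈ ℂⁿ be nonzero. Then | x*V*VDx / (x*V*Vx) | ≤ ‖V⁻¹‖₂² · | x*Dx / (x*x) | + ‖D‖₂ · ‖V⁻¹‖₂ · ‖V − (V⁻¹)*‖₂. -/

import Mathlib

open Matrix

/-- The linear action of a matrix on Euclidean space. -/
noncomputable def mvE {m n : ℕ} (M : Matrix (Fin m) (Fin n) ℂ)
    (x : EuclideanSpace ℂ (Fin n)) : EuclideanSpace ℂ (Fin m) :=
  Matrix.toEuclideanLin M x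

/-- The spectral (ℓ² operator) norm of a complex matrix. -/
noncomputable def specNorm {m n : ℕ} (M : Matrix (Fin m) (Fin n) ℂ) : ℝ :=
  ‖LinearMap.toContinuousLinearMap (Matrix.toEuclideanLin M)‖

lemma mvE_mul {n k m : ℕ} (A : Matrix (Fin m) (Fin k) ℂ) (B : Matrix (Fin k) (Fin n) ℂ)
    (x : EuclideanSpace ℂ (Fin n)) : mvE (A * B) x = mvE A (mvE B x) := by
  simp [mvE, Matrix.toEuclideanLin_apply, Matrix.mulVec_mulVec]

lemma mvE_adj {n m : ℕ} (A : Matrix (Fin m) (Fin n) ℂ) (x : EuclideanSpace ℂ (Fin n))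
    (y : EuclideanSpace ℂ (Fin m)) : (inner ℂ x (mvE Aᴴ y) : ℂ) = inner ℂ (mvE A x) y := by
  simp [mvE, Matrix.toEuclideanLin_conjTranspose_eq_adjoint, LinearMap.adjoint_inner_right]

lemma specNorm_bound {n m : ℕ} (A : Matrix (Fin m) (Fin n) ℂ) (x : EuclideanSpace ℂ (Fin n)) :
    ‖mvE A x‖ ≤ specNorm A * ‖x‖ :=
  (LinearMap.toContinuousLinearMap (Matrix.toEuclideanLin A)).le_opNorm x

/-- For `V` invertible, `D` diagonal and `x ≠ 0`,
`|x*V*VDx/(x*V*Vx)| ≤ ‖V⁻¹‖₂²·|x*Dx/(x*x)| + ‖D‖₂·‖V⁻¹‖₂·‖V − (V⁻¹)*‖₂`. -/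
theorem nonnormal_rayleigh_bound (n : ℕ) (V : Matrix (Fin n) (Fin n) ℂ) (hV : IsUnit V.det)
    (D : Matrix (Fin n) (Fin n) ℂ) (hD : D.IsDiag)
    (x : EuclideanSpace ℂ (Fin n)) (hx : x ≠ 0) :
    ‖(inner ℂ x (mvE (Vᴴ * V * D) x) : ℂ) / (inner ℂ x (mvE (Vᴴ * V) x) : ℂ)‖ ≤
      specNorm V⁻¹ ^ 2 * ‖(inner ℂ x (mvE D x) : ℂ) / (inner ℂ x x : ℂ)‖ +
        specNorm D * specNorm V⁻¹ * specNorm (V - (V⁻¹)ᴴ) := by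
  set v := mvE V x with hv
  have hVinv : mvE V⁻¹ v = x := by
    rw [hv, ← mvE_mul, Matrix.nonsing_inv_mul V hV]
    simp [mvE, Matrix.toEuclideanLin_apply, Matrix.one_mulVec]
  have hxnorm : ‖x‖ ≤ specNorm V⁻¹ * ‖v‖ := by
    calc ‖x‖ = ‖mvE V⁻¹ v‖ := by rw [hVinv]
    _ ≤ specNorm V⁻¹ * ‖v‖ := specNorm_bound _ _
  have hvne : v ≠ 0 := by
    intro h
    apply hx
    rw [← hVinv, h]
    simp [mvE]
  have hvpos : (0:ℝ) < ‖v‖ ^ 2 := pow_pos (norm_pos_iff.2 hvne) 2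
  have hxpos : (0:ℝ) < ‖x‖ ^ 2 := pow_pos (norm_pos_iff.2 hx) 2
  -- denominator
  have hden : (inner ℂ x (mvE (Vᴴ * V) x) : ℂ) = (‖v‖ : ℂ) ^ 2 := by
    rw [mvE_mul, mvE_adj, ← hv, inner_self_eq_norm_sq_to_K]
    norm_cast
  -- decomposition
  have hdec : (inner ℂ x (mvE (Vᴴ * V * D) x) : ℂ)
      = inner ℂ x (mvE D x) + inner ℂ v (mvE (V - (V⁻¹)ᴴ) (mvE D x)) := by
    have h1 : Vᴴ * V * D = Vᴴ * (V * D) := mul_assoc _ _ _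
    rw [h1, mvE_mul, mvE_adj, ← hv, mvE_mul]
    have h2 : mvE V (mvE D x) = mvE (V - (V⁻¹)ᴴ) (mvE D x) + mvE (V⁻¹)ᴴ (mvE D x) := by
      simp [mvE, map_sub, LinearMap.sub_apply]
    rw [h2, inner_add_right]
    have h3 : (inner ℂ v (mvE (V⁻¹)ᴴ (mvE D x)) : ℂ) = inner ℂ x (mvE D x) := by
      rw [mvE_adj V⁻¹ v (mvE D x), hVinv]
    rw [h3]; ring
  set a : ℂ := inner ℂ x (mvE D x) with ha
  set C : ℝ := specNorm D * specNorm V⁻¹ * specNorm (V - (V⁻¹)ᴴ) with hC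
  have herr : ‖(inner ℂ v (mvE (V - (V⁻¹)ᴴ) (mvE D x)) : ℂ)‖ ≤ C * ‖v‖^2 := by
    calc ‖(inner ℂ v (mvE (V - (V⁻¹)ᴴ) (mvE D x)) : ℂ)‖
        ≤ ‖v‖ * ‖mvE (V - (V⁻¹)ᴴ) (mvE D x)‖ := by
          exact norm_inner_le_norm _ _
      _ ≤ ‖v‖ * (specNorm (V - (V⁻¹)ᴴ) * ‖mvE D x‖) := by
          gcongr; exact specNorm_bound _ _
      _ ≤ ‖v‖ * (specNorm (V - (V⁻¹)ᴴ) * (specNorm D * ‖x‖)) := by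
          gcongr
          · have := norm_nonneg (LinearMap.toContinuousLinearMap (Matrix.toEuclideanLin (V - (V⁻¹)ᴴ)))
            exact this
          · exact specNorm_bound _ _
      _ ≤ ‖v‖ * (specNorm (V - (V⁻¹)ᴴ) * (specNorm D * (specNorm V⁻¹ * ‖v‖))) := by
          gcongr
          · have := norm_nonneg (LinearMap.toContinuousLinearMap (Matrix.toEuclideanLin (V - (V⁻¹)ᴴ)))
            exact this
          · have := norm_nonneg (LinearMap.toContinuousLinearMap (Matrix.toEuclideanLin D))
            exact this
      _ = C * ‖v‖^2 := by rw [hC]; ring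
  have hnum : ‖(inner ℂ x (mvE (Vᴴ * V * D) x) : ℂ)‖ ≤ ‖a‖ + C * ‖v‖^2 := by
    rw [hdec]
    calc ‖(a + inner ℂ v (mvE (V - (V⁻¹)ᴴ) (mvE D x)))‖
        ≤ ‖a‖ + ‖(inner ℂ v (mvE (V - (V⁻¹)ᴴ) (mvE D x)) : ℂ)‖ :=
          norm_add_le _ _
      _ ≤ ‖a‖ + C * ‖v‖^2 := by linarith [herr]
  have hinner_xx : (inner ℂ x x : ℂ) = (‖x‖ : ℂ) ^ 2 := inner_self_eq_norm_sq_to_K x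
  have hLHS : ‖(inner ℂ x (mvE (Vᴴ * V * D) x) : ℂ) / (inner ℂ x (mvE (Vᴴ * V) x) : ℂ)‖
      = ‖(inner ℂ x (mvE (Vᴴ * V * D) x) : ℂ)‖ / ‖v‖^2 := by
    rw [norm_div, hden, ← Complex.ofReal_pow, Complex.norm_real, Real.norm_eq_abs,
      abs_of_nonneg (le_of_lt hvpos)]
  have hRHSa : ‖(a / (inner ℂ x x : ℂ))‖ = ‖a‖ / ‖x‖^2 := by
    rw [norm_div, hinner_xx, ← Complex.ofReal_pow, Complex.norm_real, Real.norm_eq_abs,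
      abs_of_nonneg (le_of_lt hxpos)]
  rw [hLHS, hRHSa]
  rw [div_le_iff₀ hvpos]
  have h2 : ‖x‖^2 ≤ specNorm V⁻¹ ^2 * ‖v‖^2 := by
    have := mul_self_le_mul_self (norm_nonneg x) hxnorm
    calc ‖x‖^2 = ‖x‖ * ‖x‖ := sq ‖x‖
      _ ≤ (specNorm V⁻¹ * ‖v‖) * (specNorm V⁻¹ * ‖v‖) := this
      _ = specNorm V⁻¹ ^2 * ‖v‖^2 := by ring
  have key : ‖a‖ ≤ specNorm V⁻¹ ^ 2 * (‖a‖ / ‖x‖ ^ 2) * ‖v‖ ^ 2 := by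
    calc ‖a‖ = ‖a‖ / ‖x‖^2 * ‖x‖^2 := by field_simp
      _ ≤ ‖a‖ / ‖x‖^2 * (specNorm V⁻¹ ^2 * ‖v‖^2) := by
          apply mul_le_mul_of_nonneg_left h2
          positivity
      _ = specNorm V⁻¹ ^ 2 * (‖a‖ / ‖x‖ ^ 2) * ‖v‖ ^ 2 := by ring
  calc ‖(inner ℂ x (mvE (Vᴴ * V * D) x) : ℂ)‖ ≤ ‖a‖ + C * ‖v‖^2 := hnum
    _ ≤ specNorm V⁻¹ ^ 2 * (‖a‖ / ‖x‖ ^ 2) * ‖v‖ ^ 2 + C * ‖v‖^2 := by linarith [key]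
    _ = (specNorm V⁻¹ ^ 2 * (‖a‖ / ‖x‖ ^ 2) + C) * ‖v‖ ^ 2 := by ring
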